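/- Let u, v ∈ ℍ^{n+1} be non-proportional null vectors and let z ∈ ℍ^{n+1} be a negative vector. Set η = ⟨u,z⟩⟨u,v⟩⁻¹⟨z,v⟩⟨z,z⟩⁻¹. Then the line-distance quantity d(u,v;z) = inf{ |⟨z,w⟩|²/(⟨z,z⟩⟨w,w⟩) : w = uλ + vμ, λ,μ ∈ ℍ, ⟨w,w⟩ < 0 } equals 2·Re(η). (Equivalently, cosh²(ρ(L_{uv},z)/2) = 2 Re(η), where ρ(L_{uv},z) is the Bergman distance from the point represented by z to the quaternionic line spanned by u and v.) -/

import Mathlib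

open scoped Quaternion

noncomputable section

/-- The quaternionic Hermitian form of signature (n,1) on ℍ^{n+1}:
`⟨z,w⟩ = w̄₁ z_{n+1} + Σ_{i=2}^n w̄ᵢ zᵢ + w̄_{n+1} z₁`. -/
noncomputable def herm {n : ℕ} (z w : Fin (n+1) → ℍ[ℝ]) : ℍ[ℝ] :=
  star (w 0) * z (Fin.last n)
    + ∑ i ∈ Finset.Ioo (0 : Fin (n+1)) (Fin.last n), star (w i) * z i
    + star (w (Fin.last n)) * z 0

/-- `w` is (right-)proportional to `z`: `w = zλ` for some `λ ∈ ℍ`. -/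
def Prp {n : ℕ} (z w : Fin (n+1) → ℍ[ℝ]) : Prop :=
  ∃ lam : ℍ[ℝ], w = fun i => z i * lam

/-- Right scalar multiplication on ℍ^{n+1}. -/
noncomputable def smulR {n : ℕ} (z : Fin (n+1) → ℍ[ℝ]) (lam : ℍ[ℝ]) :
    Fin (n+1) → ℍ[ℝ] := fun i => z i * lam

/-- The quaternionic triple product `⟨p₁,p₂,p₃⟩ = ⟨p₂,p₁⟩⟨p₃,p₂⟩⟨p₁,p₃⟩`. -/
noncomputable def tri {n : ℕ} (p₁ p₂ p₃ : Fin (n+1) → ℍ[ℝ]) : ℍ[ℝ] :=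
  herm p₂ p₁ * herm p₃ p₂ * herm p₁ p₃

/-- The quaternionic Cartan angular invariant
`𝔸(p₁,p₂,p₃) = arccos(Re(−⟨p₁,p₂,p₃⟩)/|⟨p₁,p₂,p₃⟩|)`. -/
noncomputable def cartan {n : ℕ} (p₁ p₂ p₃ : Fin (n+1) → ℍ[ℝ]) : ℝ :=
  Real.arccos ((-(tri p₁ p₂ p₃)).re / ‖tri p₁ p₂ p₃‖)

/-- The quaternionic cross-ratio `𝕏(p₁,p₂,p₃,p₄) = ⟨p₃,p₁⟩⟨p₃,p₂⟩⁻¹⟨p₄,p₂⟩⟨p₄,p₁⟩⁻¹`. -/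
noncomputable def crossX {n : ℕ} (p₁ p₂ p₃ p₄ : Fin (n+1) → ℍ[ℝ]) : ℍ[ℝ] :=
  herm p₃ p₁ * (herm p₃ p₂)⁻¹ * herm p₄ p₂ * (herm p₄ p₁)⁻¹

/-- The group Sp(n,1) of quaternionic matrices preserving the Hermitian form. -/
def SpGrp (n : ℕ) : Set (Matrix (Fin (n+1)) (Fin (n+1)) ℍ[ℝ]) :=
  {g | ∀ z w : Fin (n+1) → ℍ[ℝ], herm (g.mulVec z) (g.mulVec w) = herm z w}

/-- Similarity of quaternions: `b = μ a μ⁻¹` for some nonzero `μ`. -/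
def QSim (a b : ℍ[ℝ]) : Prop := ∃ mu : ℍ[ℝ], mu ≠ 0 ∧ b = mu * a * mu⁻¹

/-- `η(u,v,z) = ⟨u,z⟩⟨u,v⟩⁻¹⟨z,v⟩⟨z,z⟩⁻¹`. -/
noncomputable def etaq {n : ℕ} (u v z : Fin (n+1) → ℍ[ℝ]) : ℍ[ℝ] :=
  herm u z * (herm u v)⁻¹ * herm z v * (herm z z)⁻¹

/-- The line-distance quantity
`d(u,v;z) = inf { |⟨z,w⟩|²/(⟨z,z⟩⟨w,w⟩) : w = uλ + vμ, ⟨w,w⟩ < 0 }`;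
it equals `cosh²(ρ(L_{uv},z)/2)`. -/
noncomputable def lineDist {n : ℕ} (u v z : Fin (n+1) → ℍ[ℝ]) : ℝ :=
  sInf { x : ℝ | ∃ lam mu : ℍ[ℝ],
    (herm (fun i => u i * lam + v i * mu) (fun i => u i * lam + v i * mu)).re < 0 ∧
    x = ‖herm z (fun i => u i * lam + v i * mu)‖^2
        / ((herm z z).re *
           (herm (fun i => u i * lam + v i * mu) (fun i => u i * lam + v i * mu)).re) }

section AuxLemmas

variable {n : ℕ}

lemma star_herm (z w : Fin (n+1) → ℍ[ℝ]) : star (herm z w) = herm w z := by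
  simp only [herm, star_add, star_mul, star_star, star_sum]
  abel

lemma herm_lin_left (a b w : Fin (n+1) → ℍ[ℝ]) (l m : ℍ[ℝ]) :
    herm (fun i => a i * l + b i * m) w = herm a w * l + herm b w * m := by
  simp only [herm, mul_add, ← mul_assoc, Finset.sum_add_distrib, Finset.sum_mul, add_mul]
  abel

lemma herm_lin_right (z a b : Fin (n+1) → ℍ[ℝ]) (l m : ℍ[ℝ]) :
    herm z (fun i => a i * l + b i * m) = star l * herm z a + star m * herm z b := by
  simp only [herm, star_add, star_mul, add_mul, mul_assoc, Finset.sum_add_distrib,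
    mul_add, Finset.mul_sum]
  abel

lemma herm_sub_left (a b w : Fin (n+1) → ℍ[ℝ]) :
    herm (fun i => a i - b i) w = herm a w - herm b w := by
  simp only [herm, mul_sub, Finset.sum_sub_distrib]
  abel

lemma herm_sub_right (z a b : Fin (n+1) → ℍ[ℝ]) :
    herm z (fun i => a i - b i) = herm z a - herm z b := by
  simp only [herm, star_sub, sub_mul, Finset.sum_sub_distrib]
  abel

lemma herm_self_real (z : Fin (n+1) → ℍ[ℝ]) : herm z z = ((herm z z).re : ℍ[ℝ]) :=
  Quaternion.star_eq_self.mp (star_herm z z)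

lemma re_sum {α : Type*} (s : Finset α) (f : α → ℍ[ℝ]) :
    (∑ i ∈ s, f i).re = ∑ i ∈ s, (f i).re := by
  classical
  induction s using Finset.cons_induction with
  | empty => simp
  | cons a s ha ih => rw [Finset.sum_cons, Finset.sum_cons, Quaternion.re_add, ih]

lemma herm_first_zero_re (w : Fin (n+1) → ℍ[ℝ]) (h0 : w 0 = 0) :
    (herm w w).re = ∑ i ∈ Finset.Ioo (0 : Fin (n+1)) (Fin.last n),
      Quaternion.normSq (w i) := by
  simp only [herm, h0, star_zero, zero_mul, mul_zero, add_zero, zero_add,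
    Quaternion.star_mul_self, re_sum, Quaternion.re_coe]

lemma herm_first_zero_re_nonneg (w : Fin (n+1) → ℍ[ℝ]) (h0 : w 0 = 0) :
    0 ≤ (herm w w).re := by
  rw [herm_first_zero_re w h0]
  exact Finset.sum_nonneg fun i _ => Quaternion.normSq_nonneg

lemma null_first_zero (w : Fin (n+1) → ℍ[ℝ]) (h0 : w 0 = 0) (hww : herm w w = 0) :
    ∀ i : Fin (n+1), i ≠ Fin.last n → w i = 0 := by
  have hs : ∑ i ∈ Finset.Ioo (0 : Fin (n+1)) (Fin.last n), Quaternion.normSq (w i) = 0 := by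
    rw [← herm_first_zero_re w h0, hww]; rfl
  have hz : ∀ i ∈ Finset.Ioo (0 : Fin (n+1)) (Fin.last n), Quaternion.normSq (w i) = 0 :=
    (Finset.sum_eq_zero_iff_of_nonneg fun i _ => Quaternion.normSq_nonneg).mp hs
  intro i hlast
  by_cases hi0 : i = 0
  · rw [hi0]; exact h0
  · have : i ∈ Finset.Ioo (0 : Fin (n+1)) (Fin.last n) := by
      rw [Finset.mem_Ioo]
      exact ⟨Fin.pos_iff_ne_zero.mpr hi0, lt_of_le_of_ne (Fin.le_last i) hlast⟩
    exact Quaternion.normSq_eq_zero.mp (hz i this)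

lemma last_ne_zero (u : Fin (n+1) → ℍ[ℝ]) (hu : u ≠ 0)
    (hmid : ∀ i : Fin (n+1), i ≠ Fin.last n → u i = 0) : u (Fin.last n) ≠ 0 := by
  intro h
  apply hu
  funext i
  by_cases hi : i = Fin.last n
  · rw [hi, h]; rfl
  · rw [hmid i hi]; rfl

lemma herm_of_last_supported (z u : Fin (n+1) → ℍ[ℝ]) (h0 : u 0 = 0)
    (hmid : ∀ i : Fin (n+1), i ≠ Fin.last n → u i = 0) :
    herm z u = star (u (Fin.last n)) * z 0 := by
  rw [herm, h0, Finset.sum_eq_zero (fun i hi => by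
    rw [hmid i (Finset.mem_Ioo.mp hi).2.ne, star_zero, zero_mul])]
  simp

lemma herm_of_last_supported' (z u : Fin (n+1) → ℍ[ℝ]) (h0 : u 0 = 0)
    (hmid : ∀ i : Fin (n+1), i ≠ Fin.last n → u i = 0) :
    herm u z = star (z 0) * u (Fin.last n) := by
  rw [← star_herm, herm_of_last_supported z u h0 hmid, star_mul, star_star]

lemma neg_herm_null_ne (z u : Fin (n+1) → ℍ[ℝ]) (hz : (herm z z).re < 0)
    (huu : herm u u = 0) (hu : u ≠ 0) : herm z u ≠ 0 := by
  have hz0 : z 0 ≠ 0 := by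
    intro h
    exact absurd (herm_first_zero_re_nonneg z h) (not_le.mpr hz)
  by_cases hu0 : u 0 = 0
  · have hmid := null_first_zero u hu0 huu
    rw [herm_of_last_supported z u hu0 hmid]
    exact mul_ne_zero (star_ne_zero.mpr (last_ne_zero u hu hmid)) hz0
  · intro hB
    set a := (z 0)⁻¹ with ha
    set b := (u 0)⁻¹ with hb
    have hane : a ≠ 0 := inv_ne_zero hz0
    have huz : herm u z = 0 := by rw [← star_herm, hB, star_zero]
    have e : (fun i => z i * a - u i * b) = (fun i => z i * a + u i * (-b)) := by
      funext i; rw [mul_neg, sub_eq_add_neg]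
    have hw0 : (fun i => z i * a - u i * b) 0 = 0 := by
      simp only [ha, hb, mul_inv_cancel₀ hz0, mul_inv_cancel₀ hu0, sub_self]
    have hww : herm (fun i => z i * a - u i * b) (fun i => z i * a - u i * b)
        = ((Quaternion.normSq a * (herm z z).re : ℝ) : ℍ[ℝ]) := by
      rw [e, herm_lin_left, herm_lin_right, herm_lin_right, hB, huz, huu]
      simp only [mul_zero, add_zero, zero_add, zero_mul, mul_zero, star_neg, neg_zero]
      rw [herm_self_real z, mul_assoc, Quaternion.coe_commutes, ← mul_assoc,
        Quaternion.star_mul_self, ← Quaternion.coe_mul, Quaternion.re_coe]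
    have := herm_first_zero_re_nonneg (fun i => z i * a - u i * b) hw0
    rw [hww, Quaternion.re_coe] at this
    have hpos : 0 < Quaternion.normSq a :=
      lt_of_le_of_ne Quaternion.normSq_nonneg
        (fun h => hane (Quaternion.normSq_eq_zero.mp h.symm))
    nlinarith [mul_pos hpos (neg_pos.mpr hz)]

lemma null_orth_prp (u v : Fin (n+1) → ℍ[ℝ]) (huu : herm u u = 0) (hvv : herm v v = 0)
    (hu : u ≠ 0) (hv : v ≠ 0) (h : herm u v = 0) : Prp u v := by
  by_cases hu0 : u 0 = 0
  · have humid := null_first_zero u hu0 huu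
    by_cases hv0 : v 0 = 0
    · have hvmid := null_first_zero v hv0 hvv
      have hul := last_ne_zero u hu humid
      refine ⟨(u (Fin.last n))⁻¹ * v (Fin.last n), funext fun i => ?_⟩
      by_cases hi : i = Fin.last n
      · rw [hi, ← mul_assoc, mul_inv_cancel₀ hul, one_mul]
      · rw [hvmid i hi, humid i hi, zero_mul]
    · exfalso
      rw [herm_of_last_supported' v u hu0 humid] at h
      exact mul_ne_zero (star_ne_zero.mpr hv0) (last_ne_zero u hu humid) h
  · by_cases hv0 : v 0 = 0
    · exfalso
      have hvmid := null_first_zero v hv0 hvv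
      rw [herm_of_last_supported u v hv0 hvmid] at h
      exact mul_ne_zero (star_ne_zero.mpr (last_ne_zero v hv hvmid)) hu0 h
    · set a := (u 0)⁻¹ with ha
      set b := (v 0)⁻¹ with hb
      have hvu : herm v u = 0 := by rw [← star_herm, h, star_zero]
      have e : (fun i => u i * a - v i * b) = (fun i => u i * a + v i * (-b)) := by
        funext i; rw [mul_neg, sub_eq_add_neg]
      have hw0 : (fun i => u i * a - v i * b) 0 = 0 := by
        simp only [ha, hb, mul_inv_cancel₀ hu0, mul_inv_cancel₀ hv0, sub_self]
      have hww : herm (fun i => u i * a - v i * b) (fun i => u i * a - v i * b) = 0 := by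
        rw [e, herm_lin_left, herm_lin_right, herm_lin_right, h, huu, hvv, hvu]
        simp
      have hmid := null_first_zero _ hw0 hww
      have huw : herm u (fun i => u i * a - v i * b) = 0 := by
        rw [e, herm_lin_right, huu, h, mul_zero, mul_zero, add_zero]
      have hlast : (fun i => u i * a - v i * b) (Fin.last n) = 0 := by
        rw [herm_of_last_supported u _ hw0 hmid] at huw
        exact star_eq_zero.mp ((mul_eq_zero.mp huw).resolve_right hu0)
      have hwz : ∀ i, u i * a - v i * b = 0 := by
        intro i
        by_cases hi : i = Fin.last n
        · rw [hi]; exact hlast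
        · exact hmid i hi
      refine ⟨a * v 0, funext fun i => ?_⟩
      have := sub_eq_zero.mp (hwz i)
      calc v i = v i * b * v 0 := by rw [hb, mul_assoc, inv_mul_cancel₀ hv0, mul_one]
        _ = u i * a * v 0 := by rw [← this]
        _ = u i * (a * v 0) := by rw [mul_assoc]

lemma re_mul_comm (a b : ℍ[ℝ]) : (a * b).re = (b * a).re := by
  rw [Quaternion.re_mul, Quaternion.re_mul]; ring

lemma re_conj_mul (S F : ℍ[ℝ]) : (S * F * star S).re = Quaternion.normSq S * F.re := by
  rw [re_mul_comm, ← mul_assoc, Quaternion.star_mul_self, Quaternion.coe_mul_eq_smul,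
    Quaternion.re_smul, smul_eq_mul]

lemma abs_re_le_norm (a : ℍ[ℝ]) : |a.re| ≤ ‖a‖ := by
  have h1 : a.re ^ 2 ≤ ‖a‖ * ‖a‖ := by
    rw [← Quaternion.normSq_eq_norm_mul_self, Quaternion.normSq_def']
    nlinarith [sq_nonneg a.imI, sq_nonneg a.imJ, sq_nonneg a.imK]
  have h2 : (0:ℝ) ≤ ‖a‖ := norm_nonneg a
  nlinarith [abs_nonneg a.re, sq_abs a.re]

lemma key_ineq (F S T : ℍ[ℝ]) : 4 * F.re * (T * F * star S).re ≤ ‖F‖^2 * ‖S + T‖^2 := by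
  have hT : T = (S + T) - S := by rw [add_sub_cancel_left]
  have hre : (T * F * star S).re
      = ((S + T) * F * star S).re - Quaternion.normSq S * F.re := by
    conv_lhs => rw [hT]
    rw [sub_mul, sub_mul, Quaternion.re_sub, re_conj_mul]
  have hns : Quaternion.normSq S = ‖S‖ * ‖S‖ := Quaternion.normSq_eq_norm_mul_self S
  rw [hre, hns]
  have habs : |((S + T) * F * star S).re| ≤ ‖S + T‖ * ‖F‖ * ‖S‖ := by
    calc |((S + T) * F * star S).re| ≤ ‖(S + T) * F * star S‖ := abs_re_le_norm _
      _ = ‖S + T‖ * ‖F‖ * ‖S‖ := by rw [norm_mul, norm_mul, norm_star]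
  have h1 := abs_le.mp habs
  rcases le_or_gt 0 F.re with hF | hF
  · nlinarith [sq_nonneg (‖F‖ * ‖S + T‖ - 2 * F.re * ‖S‖),
      mul_le_mul_of_nonneg_left h1.2 (by linarith : (0:ℝ) ≤ 4 * F.re)]
  · nlinarith [sq_nonneg (‖F‖ * ‖S + T‖ + 2 * F.re * ‖S‖),
      mul_le_mul_of_nonpos_left h1.1 (by linarith : 4 * F.re ≤ 0)]

set_option maxHeartbeats 1000000 in
theorem stmt9_aux {n : ℕ} (hn : 2 ≤ n) (u v z : Fin (n+1) → ℍ[ℝ])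
    (hu : u ≠ 0) (hv : v ≠ 0) (huu : herm u u = 0) (hvv : herm v v = 0)
    (hprop : ¬ Prp u v) (hz : (herm z z).re < 0) :
    sInf { x : ℝ | ∃ lam mu : ℍ[ℝ],
    (herm (fun i => u i * lam + v i * mu) (fun i => u i * lam + v i * mu)).re < 0 ∧
    x = ‖herm z (fun i => u i * lam + v i * mu)‖^2
        / ((herm z z).re *
           (herm (fun i => u i * lam + v i * mu) (fun i => u i * lam + v i * mu)).re) }
    = 2 * ((herm u z * (herm u v)⁻¹ * herm z v * (herm z z)⁻¹).re) := by
  set r := (herm z z).re with hrdef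
  set A := herm u v with hAdef
  set B := herm z u with hBdef
  set C := herm z v with hCdef
  set Q := star B * A⁻¹ * C with hQdef
  set K := Q.re with hKdef
  have hA : A ≠ 0 := fun h => hprop (null_orth_prp u v huu hvv hu hv h)
  have hB : B ≠ 0 := neg_herm_null_ne z u hz huu hu
  have hC : C ≠ 0 := neg_herm_null_ne z v hz hvv hv
  have hsA : star A ≠ 0 := star_ne_zero.mpr hA
  have hsB : star B ≠ 0 := star_ne_zero.mpr hB
  have hr : r < 0 := hz
  have hr0 : r ≠ 0 := ne_of_lt hr
  have hzz : herm z z = ((r : ℝ) : ℍ[ℝ]) := herm_self_real z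
  have hvu : herm v u = star A := (star_herm u v).symm
  have huz : herm u z = star B := (star_herm z u).symm
  -- combination formulas
  have hcomb : ∀ lam mu : ℍ[ℝ],
      herm (fun i => u i * lam + v i * mu) (fun i => u i * lam + v i * mu)
        = star mu * A * lam + star lam * star A * mu := by
    intro lam mu
    rw [herm_lin_left, herm_lin_right, herm_lin_right, huu, hvv, hvu, ← hAdef,
      mul_zero, zero_add, mul_zero, add_zero, mul_assoc, mul_assoc]
  have hzw : ∀ lam mu : ℍ[ℝ],
      herm z (fun i => u i * lam + v i * mu) = star lam * B + star mu * C := by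
    intro lam mu
    rw [herm_lin_right, ← hBdef, ← hCdef]
  -- lam₀, mu₀ : the projection point
  set lam₀ := A⁻¹ * C with hlamdef
  set mu₀ := (star A)⁻¹ * B with hmudef
  have hsmu₀ : star mu₀ = star B * A⁻¹ := by
    rw [hmudef, star_mul, star_inv₀, star_star]
  have hslam₀ : star lam₀ = star C * (star A)⁻¹ := by
    rw [hlamdef, star_mul, star_inv₀]
  have hQ1 : star mu₀ * A * lam₀ = Q := by
    rw [hsmu₀, hlamdef, hQdef]
    simp only [mul_assoc, inv_mul_cancel_left₀ hA]
  have hsQ : star Q = star C * (star A)⁻¹ * B := by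
    rw [hQdef, star_mul, star_mul, star_inv₀, star_star, ← mul_assoc]
  have hQ2 : star lam₀ * star A * mu₀ = star Q := by
    rw [hslam₀, hmudef, hsQ, mul_assoc, mul_assoc, inv_mul_cancel_left₀ hsA]
    exact (mul_assoc _ _ _).symm
  have hWW₀ : herm (fun i => u i * lam₀ + v i * mu₀) (fun i => u i * lam₀ + v i * mu₀)
      = ((2 * K : ℝ) : ℍ[ℝ]) := by
    rw [hcomb, hQ1, hQ2, Quaternion.self_add_star']
  have hzW₀ : herm z (fun i => u i * lam₀ + v i * mu₀) = ((2 * K : ℝ) : ℍ[ℝ]) := by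
    have h1 : star lam₀ * B = star Q := by
      rw [hslam₀, hsQ, mul_assoc]
    have h2 : star mu₀ * C = Q := by
      rw [hsmu₀, hQdef]
    rw [hzw, h1, h2, Quaternion.star_add_self']
  -- K < 0
  have hKr : 2 * K ≤ r := by
    have hzpu : herm (fun i => z i - (u i * lam₀ + v i * mu₀)) u = 0 := by
      rw [herm_sub_left, herm_lin_left, huu, hvu, zero_mul, zero_add, ← hBdef,
        hmudef, mul_inv_cancel_left₀ hsA, sub_self]
    have hzpv : herm (fun i => z i - (u i * lam₀ + v i * mu₀)) v = 0 := by
      rw [herm_sub_left, herm_lin_left, hvv, ← hAdef, zero_mul, add_zero, ← hCdef,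
        hlamdef, mul_inv_cancel_left₀ hA, sub_self]
    have hzpW : herm (fun i => z i - (u i * lam₀ + v i * mu₀))
        (fun i => u i * lam₀ + v i * mu₀) = 0 := by
      rw [herm_lin_right, hzpu, hzpv, mul_zero, mul_zero, add_zero]
    have hzpz : herm (fun i => z i - (u i * lam₀ + v i * mu₀)) z
        = herm z z - ((2 * K : ℝ) : ℍ[ℝ]) := by
      rw [← star_herm, herm_sub_right, hzW₀, star_sub, star_herm, Quaternion.star_coe]
    have hzpzp : herm (fun i => z i - (u i * lam₀ + v i * mu₀))
        (fun i => z i - (u i * lam₀ + v i * mu₀))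
        = herm z z - ((2 * K : ℝ) : ℍ[ℝ]) := by
      rw [herm_sub_right, hzpz, hzpW, sub_zero]
    have hnn : 0 ≤ (herm (fun i => z i - (u i * lam₀ + v i * mu₀))
        (fun i => z i - (u i * lam₀ + v i * mu₀))).re := by
      by_contra hcon
      push_neg at hcon
      exact neg_herm_null_ne _ u hcon huu hu hzpu
    rw [hzpzp, Quaternion.re_sub, Quaternion.re_coe] at hnn
    linarith
  have hK : K < 0 := by linarith
  have hK2 : 2 * K ≠ 0 := by linarith
  -- lower bound
  have hlb : ∀ x ∈ { x : ℝ | ∃ lam mu : ℍ[ℝ],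
      (herm (fun i => u i * lam + v i * mu) (fun i => u i * lam + v i * mu)).re < 0 ∧
      x = ‖herm z (fun i => u i * lam + v i * mu)‖^2
        / ((herm z z).re *
           (herm (fun i => u i * lam + v i * mu) (fun i => u i * lam + v i * mu)).re) },
      2 * K / r ≤ x := by
    rintro x ⟨lam, mu, hneg, rfl⟩
    set F := C⁻¹ * A * (star B)⁻¹ with hFdef
    have hF : F ≠ 0 := mul_ne_zero (mul_ne_zero (inv_ne_zero hC) hA) (inv_ne_zero hsB)
    have hFQ : F⁻¹ = Q := by
      rw [hFdef, hQdef, mul_inv_rev, mul_inv_rev, inv_inv, inv_inv]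
      rw [mul_assoc]
    have hKF : F.re = K * Quaternion.normSq F := by
      have h1 : Q.re = (F⁻¹).re := by rw [hFQ]
      rw [hKdef, h1, Quaternion.inv_def, Quaternion.re_smul, Quaternion.re_star,
        smul_eq_mul]
      have hnsF : Quaternion.normSq F ≠ 0 := fun h => hF (Quaternion.normSq_eq_zero.mp h)
      field_simp
    set S := star lam * B with hSdef
    set T := star mu * C with hTdef
    have hTFS : T * F * star S = star mu * A * lam := by
      rw [hTdef, hSdef, hFdef, star_mul, star_star]
      simp only [mul_assoc]
      rw [mul_inv_cancel_left₀ hC, inv_mul_cancel_left₀ hsB]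
    have hkey := key_ineq F S T
    rw [hTFS, hKF] at hkey
    have hH : (herm (fun i => u i * lam + v i * mu) (fun i => u i * lam + v i * mu)).re
        = 2 * (star mu * A * lam).re := by
      rw [hcomb, Quaternion.re_add]
      have : star lam * star A * mu = star (star mu * A * lam) := by
        rw [star_mul, star_mul, star_star, ← mul_assoc]
      rw [this, Quaternion.re_star]
      ring
    have hnorm : ‖F‖^2 = Quaternion.normSq F := by
      rw [Quaternion.normSq_eq_norm_mul_self, sq]
    have hnsFpos : 0 < Quaternion.normSq F :=
      lt_of_le_of_ne Quaternion.normSq_nonneg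
        (fun h => hF (Quaternion.normSq_eq_zero.mp h.symm))
    have hzwe : herm z (fun i => u i * lam + v i * mu) = S + T := by
      rw [hzw, hSdef, hTdef]
    -- from hkey : 4 * (K * normSq F) * (star mu * A * lam).re ≤ ‖F‖^2 * ‖S+T‖^2
    have hmain : 2 * K * (herm (fun i => u i * lam + v i * mu)
        (fun i => u i * lam + v i * mu)).re
        ≤ ‖herm z (fun i => u i * lam + v i * mu)‖^2 := by
      rw [hH, hzwe]
      rw [hnorm] at hkey
      nlinarith [hkey, hnsFpos]
    -- divide
    set H := (herm (fun i => u i * lam + v i * mu) (fun i => u i * lam + v i * mu)).re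
    have hH0 : H ≠ 0 := ne_of_lt hneg
    have hpos : 0 < r * H := mul_pos_of_neg_of_neg hr hneg
    rw [← hrdef]
    calc 2 * K / r = 2 * K * H / (r * H) := by
          rw [mul_div_mul_right _ _ hH0]
      _ ≤ ‖herm z (fun i => u i * lam + v i * mu)‖^2 / (r * H) := by
          apply div_le_div_of_nonneg_right hmain hpos.le
  -- membership
  have hmem : 2 * K / r ∈ { x : ℝ | ∃ lam mu : ℍ[ℝ],
      (herm (fun i => u i * lam + v i * mu) (fun i => u i * lam + v i * mu)).re < 0 ∧
      x = ‖herm z (fun i => u i * lam + v i * mu)‖^2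
        / ((herm z z).re *
           (herm (fun i => u i * lam + v i * mu) (fun i => u i * lam + v i * mu)).re) } := by
    refine ⟨lam₀, mu₀, ?_, ?_⟩
    · rw [hWW₀, Quaternion.re_coe]; linarith
    · rw [hWW₀, hzW₀, Quaternion.re_coe, ← hrdef, Quaternion.norm_coe]
      rw [Real.norm_eq_abs, sq_abs, sq, mul_div_mul_right _ _ hK2]
  -- conclude
  have hinf : sInf { x : ℝ | ∃ lam mu : ℍ[ℝ],
      (herm (fun i => u i * lam + v i * mu) (fun i => u i * lam + v i * mu)).re < 0 ∧
      x = ‖herm z (fun i => u i * lam + v i * mu)‖^2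
        / ((herm z z).re *
           (herm (fun i => u i * lam + v i * mu) (fun i => u i * lam + v i * mu)).re) }
      = 2 * K / r :=
    le_antisymm (csInf_le ⟨2 * K / r, fun x hx => hlb x hx⟩ hmem)
      (le_csInf ⟨_, hmem⟩ hlb)
  rw [hinf]
  have heta : (herm u z * A⁻¹ * C * (herm z z)⁻¹).re = r⁻¹ * K := by
    rw [huz, hzz, ← Quaternion.coe_inv, ← hQdef, Quaternion.mul_coe_eq_smul,
      Quaternion.re_smul, smul_eq_mul]
  rw [heta]
  field_simp


end AuxLemmas

/-- for non-proportional null `u,v` and negative `z`,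
`d(u,v;z) = 2 Re(η)` where `η = ⟨u,z⟩⟨u,v⟩⁻¹⟨z,v⟩⟨z,z⟩⁻¹`. -/
theorem stmt9 {n : ℕ} (hn : 2 ≤ n) (u v z : Fin (n+1) → ℍ[ℝ])
    (hu : u ≠ 0) (hv : v ≠ 0) (huu : herm u u = 0) (hvv : herm v v = 0)
    (hprop : ¬ Prp u v) (hz : (herm z z).re < 0) :
    lineDist u v z = 2 * (etaq u v z).re := by
  have h := stmt9_aux hn u v z hu hv huu hvv hprop hz
  unfold lineDist etaq
  exact h
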